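/- Let f, g be analytic on the unit disk with f(0)=g(0)=0, f'(0)=g'(0)=1, Re(f(z)/g(z)) > 0 and Re(g(z)/z) > 1/2 on the unit disk (quotients extended analytically with value 1 at 0). Then for |z| = r < 1, |z f'(z)/f(z) − 1| ≤ (3r + r²)/(1−r²). -/

import Mathlib

open Metric

open Set Complex Topology

-- Möbius automorphism maps ball to ball
lemma mobius_den_ne {z w : ℂ} (hz : z ∈ ball (0 : ℂ) 1) (hw : w ∈ ball (0 : ℂ) 1) :
    (1 : ℂ) + (starRingEnd ℂ) z * w ≠ 0 := by
  rw [mem_ball_zero_iff] at hz hw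
  have hzn : ‖z‖ < 1 := by simpa using hz
  have hwn : ‖w‖ < 1 := by simpa using hw
  intro h
  have : ‖(starRingEnd ℂ) z * w‖ = 1 := by
    have : (starRingEnd ℂ) z * w = -1 := by linear_combination h
    rw [this]; simp
  rw [norm_mul, Complex.norm_conj] at this
  nlinarith [norm_nonneg z, norm_nonneg w]

lemma mobius_mapsTo {z : ℂ} (hz : z ∈ ball (0 : ℂ) 1) :
    MapsTo (fun w => (w + z) / (1 + (starRingEnd ℂ) z * w)) (ball (0:ℂ) 1) (ball (0:ℂ) 1) := by
  intro w hw
  rw [mem_ball_zero_iff] at hz hw ⊢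
  have hzn : ‖z‖ < 1 := by simpa using hz
  have hwn : ‖w‖ < 1 := by simpa using hw
  have hden : (1 : ℂ) + (starRingEnd ℂ) z * w ≠ 0 :=
    mobius_den_ne (by rw [mem_ball_zero_iff]; simpa using hz) (by rw [mem_ball_zero_iff]; simpa using hw)
  have hdpos : (0:ℝ) < ‖1 + (starRingEnd ℂ) z * w‖ := norm_pos_iff.mpr hden
  rw [norm_div, div_lt_one hdpos]
  have h1 : Complex.normSq (w + z) < Complex.normSq (1 + (starRingEnd ℂ) z * w) := by
    simp only [Complex.normSq_apply, Complex.add_re, Complex.add_im, Complex.mul_re,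
      Complex.mul_im, Complex.conj_re, Complex.conj_im, Complex.one_re, Complex.one_im]
    have h2 : z.re ^ 2 + z.im ^ 2 < 1 := by
      have := Complex.sq_norm z; rw [Complex.normSq_apply] at this; nlinarith [norm_nonneg z, norm_nonneg w, hzn, hwn]
    have h3 : w.re ^ 2 + w.im ^ 2 < 1 := by
      have := Complex.sq_norm w; rw [Complex.normSq_apply] at this; nlinarith [norm_nonneg z, norm_nonneg w, hzn, hwn]
    nlinarith [sq_nonneg (z.re * w.re + z.im * w.im), sq_nonneg (z.re * w.im - z.im * w.re)]
  have := Complex.sq_norm (w + z)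
  have := Complex.sq_norm (1 + (starRingEnd ℂ) z * w)
  have h0 : (0:ℝ) ≤ ‖w + z‖ := norm_nonneg _
  nlinarith

-- derivative bound for maps into a half plane
lemma halfplane_deriv_bound {h : ℂ → ℂ} {a : ℝ}
    (hd : DifferentiableOn ℂ h (ball (0:ℂ) 1))
    (hre : ∀ w ∈ ball (0:ℂ) 1, a < (h w).re)
    {z : ℂ} (hz : z ∈ ball (0:ℂ) 1) :
    ‖deriv h z‖ ≤ 2 * ((h z).re - a) / (1 - ‖z‖ ^ 2) := by
  set c : ℂ := (starRingEnd ℂ) (h z) - 2 * a with hc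
  have hcre : ∀ w ∈ ball (0:ℂ) 1, 0 < (h w + c).re := by
    intro w hw
    have := hre w hw
    have := hre z hz
    simp only [hc, Complex.add_re, Complex.sub_re, Complex.conj_re, Complex.mul_re,
      Complex.ofReal_re, Complex.ofReal_im]
    norm_num
    linarith
  have hcne : ∀ w ∈ ball (0:ℂ) 1, h w + c ≠ 0 := fun w hw h0 => by
    have := hcre w hw; rw [h0] at this; simp at this
  set F : ℂ → ℂ := fun w => (h w - h z) / (h w + c) with hF
  have hFmaps : MapsTo F (ball (0:ℂ) 1) (ball (0:ℂ) 1) := by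
    intro w hw
    rw [mem_ball_zero_iff]
    have hne := hcne w hw
    have h1 : Complex.normSq (h w - h z) < Complex.normSq (h w + c) := by
      have r1 := hre w hw
      have r2 := hre z hz
      simp only [hc, Complex.normSq_apply, Complex.sub_re, Complex.sub_im, Complex.add_re,
        Complex.add_im, Complex.conj_re, Complex.conj_im, Complex.mul_re, Complex.mul_im,
        Complex.ofReal_re, Complex.ofReal_im]
      norm_num
      nlinarith
    have := Complex.sq_norm (h w - h z)
    have := Complex.sq_norm (h w + c)
    have h0' : (0:ℝ) < ‖h w + c‖ := by
      simpa [norm_pos_iff] using hne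
    have h0 : (0:ℝ) ≤ ‖h w - h z‖ := norm_nonneg _
    simp only [hF, norm_div]
    rw [div_lt_one h0']
    nlinarith
  have hFdiff : DifferentiableOn ℂ F (ball (0:ℂ) 1) :=
    ((hd.sub_const (h z)).div (hd.add_const c) hcne)
  set σ : ℂ → ℂ := fun w => (w + z) / (1 + (starRingEnd ℂ) z * w) with hσdef
  have hσmaps : MapsTo σ (ball (0:ℂ) 1) (ball (0:ℂ) 1) := mobius_mapsTo hz
  have hσdiff : DifferentiableOn ℂ σ (ball (0:ℂ) 1) := by
    apply DifferentiableOn.div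
    · exact (differentiable_id.add_const z).differentiableOn
    · exact ((differentiable_id.const_mul _).const_add 1).differentiableOn
    · exact fun w hw => mobius_den_ne hz hw
  have hσ0 : σ 0 = z := by simp [hσdef]
  have hσ0' : HasDerivAt σ (1 - z * (starRingEnd ℂ) z) 0 := by
    have h1 : HasDerivAt (fun w : ℂ => w + z) 1 0 := (hasDerivAt_id 0).add_const z
    have h2 : HasDerivAt (fun w : ℂ => (1:ℂ) + (starRingEnd ℂ) z * w) ((starRingEnd ℂ) z) 0 := by
      simpa using ((hasDerivAt_id 0).const_mul ((starRingEnd ℂ) z)).const_add 1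
    have h3 := h1.div h2 (by simp)
    convert h3 using 1
    · rfl
    · rfl
    · rfl
    simp
  have hdz : DifferentiableAt ℂ h z := (hd z hz).differentiableAt (isOpen_ball.mem_nhds hz)
  have hFz : HasDerivAt F (deriv h z / (h z + c)) z := by
    have h1 : HasDerivAt (fun w => h w - h z) (deriv h z) z := hdz.hasDerivAt.sub_const _
    have h2 : HasDerivAt (fun w => h w + c) (deriv h z) z := hdz.hasDerivAt.add_const _
    have h3 := h1.div h2 (hcne z hz)
    convert h3 using 1
    · rfl
    · rfl
    · rfl
    have hne := hcne z hz
    field_simp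
    ring
  have hGd : HasDerivAt (F ∘ σ) (deriv h z / (h z + c) * (1 - z * (starRingEnd ℂ) z)) 0 := by
    apply HasDerivAt.comp
    · rw [hσ0]; exact hFz
    · exact hσ0'
  have hGdiff : DifferentiableOn ℂ (F ∘ σ) (ball (0:ℂ) 1) := hFdiff.comp hσdiff hσmaps
  have hG0 : (F ∘ σ) 0 = 0 := by
    simp only [Function.comp_apply, hσ0, hF]
    simp
  have hGmaps : MapsTo (F ∘ σ) (ball (0:ℂ) 1) (ball ((F ∘ σ) 0) 1) := by
    rw [hG0]
    exact hFmaps.comp hσmaps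
  have key := Complex.norm_deriv_le_div_of_mapsTo_ball hGdiff (hGmaps.mono_right ball_subset_closedBall) one_pos
  rw [hGd.deriv] at key
  -- compute the norms
  have habs1 : ‖1 - z * (starRingEnd ℂ) z‖ = 1 - ‖z‖ ^ 2 := by
    rw [Complex.mul_conj]
    have : (1 : ℂ) - (Complex.normSq z : ℂ) = ((1 - Complex.normSq z : ℝ) : ℂ) := by
      push_cast; ring
    rw [this, Complex.norm_real, Real.norm_eq_abs, ← Complex.sq_norm]
    rw [_root_.abs_of_nonneg]
    have hzn : ‖z‖ < 1 := by rw [mem_ball_zero_iff] at hz; simpa using hz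
    nlinarith [norm_nonneg z]
  have habs2 : ‖h z + c‖ = 2 * ((h z).re - a) := by
    have : h z + c = ((2 * (h z).re - 2 * a : ℝ) : ℂ) := by
      rw [hc]
      have h4 := Complex.add_conj (h z)
      push_cast at h4 ⊢
      linear_combination h4
    rw [this, Complex.norm_real, Real.norm_eq_abs, _root_.abs_of_nonneg]
    · ring
    · have := hre z hz; linarith
  have hBpos : 0 < 2 * ((h z).re - a) := by have := hre z hz; linarith
  have hCpos : 0 < 1 - ‖z‖ ^ 2 := by
    have hzn : ‖z‖ < 1 := by rw [mem_ball_zero_iff] at hz; simpa using hz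
    nlinarith [norm_nonneg z]
  rw [norm_mul, norm_div, habs1, habs2] at key
  rw [le_div_iff₀ hCpos]
  have hA : (0:ℝ) ≤ ‖deriv h z‖ := norm_nonneg _
  rw [div_mul_eq_mul_div, div_le_iff₀ hBpos] at key
  linarith [key]

theorem F2_log_deriv_bound
    (f g : ℂ → ℂ)
    (hf : DifferentiableOn ℂ f (ball (0 : ℂ) 1))
    (hg : DifferentiableOn ℂ g (ball (0 : ℂ) 1))
    (hf0 : f 0 = 0) (hg0 : g 0 = 0)
    (hf0' : deriv f 0 = 1) (hg0' : deriv g 0 = 1)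
    (hfne : ∀ z ∈ ball (0 : ℂ) 1, z ≠ 0 → f z ≠ 0)
    (hgne : ∀ z ∈ ball (0 : ℂ) 1, z ≠ 0 → g z ≠ 0)
    (hfg : ∀ z ∈ ball (0 : ℂ) 1, z ≠ 0 → 0 < (f z / g z).re)
    (hgz : ∀ z ∈ ball (0 : ℂ) 1, z ≠ 0 → 1 / 2 < (g z / z).re)
    (z : ℂ) (hzball : z ∈ ball (0 : ℂ) 1) (hz0 : z ≠ 0)
    (r : ℝ) (hr : ‖z‖ = r) :
    ‖z * deriv f z / f z - 1‖ ≤ (3 * r + r ^ 2) / (1 - r ^ 2) := by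
  have hr0 : 0 < r := by rw [← hr]; exact norm_pos_iff.mpr hz0
  have hr1 : r < 1 := by rw [← hr, ← mem_ball_zero_iff]; simpa using hzball
  have hball : ball (0:ℂ) 1 ∈ 𝓝 (0:ℂ) := isOpen_ball.mem_nhds (by simp)
  set Q : ℂ → ℂ := dslope g 0 with hQdef
  set P : ℂ → ℂ := dslope f 0 with hPdef
  have hQdiff : DifferentiableOn ℂ Q (ball 0 1) :=
    (Complex.differentiableOn_dslope hball).mpr hg
  have hPdiff : DifferentiableOn ℂ P (ball 0 1) :=
    (Complex.differentiableOn_dslope hball).mpr hf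
  have hQ0 : Q 0 = 1 := by rw [hQdef, dslope_same, hg0']
  have hP0 : P 0 = 1 := by rw [hPdef, dslope_same, hf0']
  have hQeq : ∀ w : ℂ, w ≠ 0 → Q w = g w / w := by
    intro w hw
    rw [hQdef, dslope_of_ne g hw, slope_def_field, hg0, sub_zero, sub_zero]
  have hPeq : ∀ w : ℂ, w ≠ 0 → P w = f w / w := by
    intro w hw
    rw [hPdef, dslope_of_ne f hw, slope_def_field, hf0, sub_zero, sub_zero]
  have hQre : ∀ w ∈ ball (0:ℂ) 1, (1:ℝ)/2 < (Q w).re := by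
    intro w hw
    rcases eq_or_ne w 0 with rfl | hw0
    · rw [hQ0]; norm_num
    · rw [hQeq w hw0]; exact hgz w hw hw0
  have hQne : ∀ w ∈ ball (0:ℂ) 1, Q w ≠ 0 := by
    intro w hw h0
    have := hQre w hw; rw [h0] at this; simp at this; linarith
  set p : ℂ → ℂ := fun w => P w / Q w with hpdef
  have hpdiff : DifferentiableOn ℂ p (ball 0 1) := hPdiff.div hQdiff hQne
  have hpeq : ∀ w ∈ ball (0:ℂ) 1, w ≠ 0 → p w = f w / g w := by
    intro w hw hw0
    rw [hpdef]
    simp only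
    rw [hPeq w hw0, hQeq w hw0, div_div_div_comm, div_self hw0, div_one]
  have hpre : ∀ w ∈ ball (0:ℂ) 1, (0:ℝ) < (p w).re := by
    intro w hw
    rcases eq_or_ne w 0 with rfl | hw0
    · have : p 0 = 1 := by rw [hpdef]; simp only; rw [hP0, hQ0, div_one]
      rw [this]; norm_num
    · rw [hpeq w hw hw0]; exact hfg w hw hw0
  have hpne : p z ≠ 0 := by
    intro h0
    have := hpre z hzball; rw [h0] at this; simp at this
  have hQnez := hQne z hzball
  -- derivative bounds
  have hpd := halfplane_deriv_bound hpdiff (a := 0) (fun w hw => hpre w hw) hzball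
  have hQd := halfplane_deriv_bound hQdiff (a := 1/2) (fun w hw => hQre w hw) hzball
  -- upper bound on |Q z|
  have hQub : (1 - r) * ‖Q z‖ ≤ 1 := by
    set ω : ℂ → ℂ := fun w => (Q w - 1) / Q w with hωdef
    have hωdiff : DifferentiableOn ℂ ω (ball 0 1) := (hQdiff.sub_const 1).div hQdiff hQne
    have hωmaps : Set.MapsTo ω (ball (0:ℂ) 1) (ball (0:ℂ) 1) := by
      intro w hw
      rw [mem_ball_zero_iff]
      have hne := hQne w hw
      have hre := hQre w hw
      have h1 : Complex.normSq (Q w - 1) < Complex.normSq (Q w) := by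
        simp only [Complex.normSq_apply, Complex.sub_re, Complex.sub_im, Complex.one_re,
          Complex.one_im]
        nlinarith
      have e1 := Complex.sq_norm (Q w - 1)
      have e2 := Complex.sq_norm (Q w)
      have h0' : (0:ℝ) < ‖Q w‖ := norm_pos_iff.mpr hne
      have h0 : (0:ℝ) ≤ ‖Q w - 1‖ := norm_nonneg _
      simp only [hωdef, norm_div]
      rw [div_lt_one h0']
      nlinarith
    have hω0 : ω 0 = 0 := by rw [hωdef]; simp only; rw [hQ0]; simp
    have := Complex.norm_le_norm_of_mapsTo_ball hωdiff (hωmaps.mono_right ball_subset_closedBall) hω0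
      (z := z) (by rw [hr]; exact hr1)
    rw [hωdef] at this
    simp only [norm_div, hr] at this
    have hQpos : (0:ℝ) < ‖Q z‖ := norm_pos_iff.mpr hQnez
    rw [div_le_iff₀ hQpos] at this
    have htri : ‖Q z‖ ≤ 1 + ‖Q z - 1‖ := by
      calc ‖Q z‖ = ‖1 + (Q z - 1)‖ := by ring_nf
        _ ≤ ‖(1:ℂ)‖ + ‖Q z - 1‖ := norm_add_le _ _
        _ = 1 + ‖Q z - 1‖ := by simp
    nlinarith
  -- differentiability at z
  have hQat : HasDerivAt Q (deriv Q z) z :=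
    ((hQdiff z hzball).differentiableAt (isOpen_ball.mem_nhds hzball)).hasDerivAt
  have hpat : HasDerivAt p (deriv p z) z :=
    ((hpdiff z hzball).differentiableAt (isOpen_ball.mem_nhds hzball)).hasDerivAt
  have hPat : HasDerivAt P (deriv p z * Q z + p z * deriv Q z) z := by
    have h1 : HasDerivAt (fun w => p w * Q w) (deriv p z * Q z + p z * deriv Q z) z :=
      hpat.mul hQat
    apply h1.congr_of_eventuallyEq
    filter_upwards [isOpen_ball.mem_nhds hzball] with w hw
    rw [hpdef]
    simp only
    rw [div_mul_cancel₀ _ (hQne w hw)]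
  have hfeq : f = fun w => w * P w := by
    funext w
    rcases eq_or_ne w 0 with rfl | hw0
    · simp [hf0]
    · rw [hPeq w hw0, mul_div_cancel₀ _ hw0]
  have hfat : HasDerivAt f (1 * P z + z * (deriv p z * Q z + p z * deriv Q z)) z := by
    rw [hfeq]
    exact (hasDerivAt_id z).mul hPat
  have hderiv : deriv f z = P z + z * (deriv p z * Q z + p z * deriv Q z) := by
    rw [hfat.deriv]; ring
  have hfz : f z = z * (p z * Q z) := by
    rw [hfeq]
    simp only
    rw [hpdef]
    simp only
    rw [div_mul_cancel₀ _ hQnez]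
  have hPz : P z = p z * Q z := by
    rw [hpdef]; simp only; rw [div_mul_cancel₀ _ hQnez]
  have hid : z * deriv f z / f z - 1 = z * deriv p z / p z + z * deriv Q z / Q z := by
    rw [hderiv, hfz, hPz]
    field_simp
    ring
  rw [hid]
  -- final estimates
  have hr2 : (0:ℝ) < 1 - r ^ 2 := by nlinarith
  set A1 := ‖deriv p z‖
  set A2 := ‖deriv Q z‖
  have hB1 : (0:ℝ) < ‖p z‖ := norm_pos_iff.mpr hpne
  have hB2 : (0:ℝ) < ‖Q z‖ := norm_pos_iff.mpr hQnez
  have hRe1 : (p z).re ≤ ‖p z‖ := Complex.re_le_norm _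
  have hRe2 : (Q z).re ≤ ‖Q z‖ := Complex.re_le_norm _
  have hRe1' : (0:ℝ) < (p z).re := hpre z hzball
  rw [hr] at hpd hQd
  have t1 : ‖z * deriv p z / p z‖ ≤ 2 * r / (1 - r ^ 2) := by
    rw [norm_div, norm_mul, hr, div_le_div_iff₀ hB1 hr2]
    have : A1 * (1 - r ^ 2) ≤ 2 * (p z).re := by
      rw [← le_div_iff₀ hr2]; simpa using hpd
    nlinarith
  have t2 : ‖z * deriv Q z / Q z‖ ≤ r * (1 + r) / (1 - r ^ 2) := by
    rw [norm_div, norm_mul, hr, div_le_div_iff₀ hB2 hr2]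
    have h2 : A2 * (1 - r ^ 2) ≤ 2 * (Q z).re - 1 := by
      rw [← le_div_iff₀ hr2]
      calc A2 ≤ 2 * ((Q z).re - 1/2) / (1 - r ^ 2) := hQd
        _ = (2 * (Q z).re - 1) / (1 - r ^ 2) := by ring
    have h3 : 2 * ‖Q z‖ - 1 ≤ (1 + r) * ‖Q z‖ := by nlinarith
    nlinarith
  calc ‖z * deriv p z / p z + z * deriv Q z / Q z‖
      ≤ ‖z * deriv p z / p z‖ + ‖z * deriv Q z / Q z‖ :=
        norm_add_le _ _
    _ ≤ 2 * r / (1 - r ^ 2) + r * (1 + r) / (1 - r ^ 2) := add_le_add t1 t2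
    _ = (3 * r + r ^ 2) / (1 - r ^ 2) := by ring
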